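/- arXiv:2109.09398 — 2 statements merged into one kernel-verified Lean document; each statement's English description precedes it below -/
import Mathlib

section
/- For a fixed positive integer m and a complex number s with Re(s) > 1, the Dirichlet series ∑_{n=1}^{∞} c_n(m)/n^s converges and equals σ_{1-s}(m)/ζ(s), where c_n(m) = ∑_{d | gcd(m,n)} d·μ(n/d), σ_{1-s}(m) = ∑_{d | m} d^{1-s}, and ζ is the Riemann zeta function. -/
open Complex

/-- The Ramanujan sum `c_n(m) = ∑_{d | gcd(m,n)} d·μ(n/d)`. -/
noncomputable def ramanujanC (n m : ℕ) : ℂ :=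
  ∑ d ∈ (Nat.gcd m n).divisors, (d : ℂ) * (ArithmeticFunction.moebius (n / d) : ℤ)

/-- `σ_z(m) = ∑_{d | m} d^z`. -/
noncomputable def sigmaz (z : ℂ) (m : ℕ) : ℂ :=
  ∑ d ∈ m.divisors, (d : ℂ) ^ z

/-- For `Re(s) > 1`, `∑_{n ≥ 1} c_n(m)/n^s` converges to `σ_{1-s}(m)/ζ(s)`. -/
theorem ramanujan_dirichlet_series (m : ℕ) (hm : 0 < m) (s : ℂ) (hs : 1 < s.re) :
    HasSum (fun n : ℕ => ramanujanC n m / (n : ℂ) ^ s)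
      (sigmaz (1 - s) m / riemannZeta s) := by
  have hζ : riemannZeta s ≠ 0 := riemannZeta_ne_zero_of_one_lt_re hs
  -- Möbius L-series has sum ζ(s)⁻¹
  have hμsum : LSeriesSummable (fun n => ((ArithmeticFunction.moebius n : ℤ) : ℂ)) s :=
    ArithmeticFunction.LSeriesSummable_moebius_iff.mpr hs
  have hLval : LSeries (fun n => ((ArithmeticFunction.moebius n : ℤ) : ℂ)) s
      = (riemannZeta s)⁻¹ := by
    have h := ArithmeticFunction.LSeries_zeta_mul_Lseries_moebius hs
    rw [ArithmeticFunction.LSeries_zeta_eq_riemannZeta hs] at h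
    field_simp at h ⊢
    linear_combination h
  have hμ : HasSum (fun n => LSeries.term (fun n => ((ArithmeticFunction.moebius n : ℤ) : ℂ)) s n)
      ((riemannZeta s)⁻¹) := hLval ▸ hμsum.hasSum
  -- per-divisor sums
  set g : ℕ → ℕ → ℂ := fun d n =>
    if d ∣ n ∧ n ≠ 0 then (d : ℂ) * (ArithmeticFunction.moebius (n / d) : ℤ) / (n : ℂ) ^ s else 0
    with hg
  have hgd : ∀ d ∈ m.divisors, HasSum (g d) ((d : ℂ) ^ (1 - s) * (riemannZeta s)⁻¹) := by
    intro d hd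
    have hd0 : 0 < d := Nat.pos_of_mem_divisors hd
    have hinj : Function.Injective (fun k : ℕ => d * k) := fun a b h => by
      exact Nat.eq_of_mul_eq_mul_left hd0 h
    refine (Function.Injective.hasSum_iff hinj ?_).mp ?_
    · intro n hn
      rw [hg]
      simp only
      rw [if_neg]
      rintro ⟨⟨k, rfl⟩, -⟩
      exact hn ⟨k, rfl⟩
    · have := hμ.mul_left ((d : ℂ) ^ (1 - s))
      convert this using 1
      · rfl
      ext k
      rcases Nat.eq_zero_or_pos k with rfl | hk
      · simp [hg, LSeries.term]
      · have hdk : (d * k : ℕ) ≠ 0 := by positivity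
        simp only [Function.comp, hg, LSeries.term]
        rw [if_pos ⟨⟨k, rfl⟩, hdk⟩, if_neg hk.ne', Nat.mul_div_cancel_left _ hd0]
        have hcast : ((d * k : ℕ) : ℂ) ^ s = (d : ℂ) ^ s * (k : ℂ) ^ s := by
          push_cast
          rw [← Complex.ofReal_natCast d, ← Complex.ofReal_natCast k,
            mul_cpow_ofReal_nonneg (by positivity) (by positivity)]
        rw [hcast]
        have hdc : (d : ℂ) ≠ 0 := Nat.cast_ne_zero.mpr hd0.ne'
        have hkc : (k : ℂ) ≠ 0 := Nat.cast_ne_zero.mpr hk.ne'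
        have hds : (d : ℂ) ^ s ≠ 0 := by
          rw [Ne, cpow_eq_zero_iff]; tauto
        have hks : (k : ℂ) ^ s ≠ 0 := by
          rw [Ne, cpow_eq_zero_iff]; tauto
        rw [cpow_sub _ _ hdc, cpow_one]
        field_simp
  have key : ∀ n, ramanujanC n m / (n : ℂ) ^ s = ∑ d ∈ m.divisors, g d n := by
    intro n
    rcases eq_or_ne n 0 with rfl | hn
    · simp [ramanujanC, hg]
    · have hset : m.divisors.filter (· ∣ n) = (Nat.gcd m n).divisors := by
        ext d
        simp only [Finset.mem_filter, Nat.mem_divisors, Nat.dvd_gcd_iff]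
        constructor
        · rintro ⟨⟨h1, -⟩, h2⟩
          exact ⟨⟨h1, h2⟩, Nat.gcd_ne_zero_left hm.ne'⟩
        · rintro ⟨⟨h1, h2⟩, -⟩
          exact ⟨⟨h1, hm.ne'⟩, h2⟩
      rw [ramanujanC, Finset.sum_div, ← hset, Finset.sum_filter]
      refine Finset.sum_congr rfl fun d hd => ?_
      by_cases hdn : d ∣ n <;> simp [hg, hn, hdn]
  have H := hasSum_sum hgd
  have hval : ∑ d ∈ m.divisors, (d : ℂ) ^ (1 - s) * (riemannZeta s)⁻¹
      = sigmaz (1 - s) m / riemannZeta s := by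
    rw [sigmaz, div_eq_mul_inv, Finset.sum_mul]
  rw [show (fun n : ℕ => ramanujanC n m / (n : ℂ) ^ s) = fun n => ∑ d ∈ m.divisors, g d n
    from funext key, ← hval]
  exact H
end

section
/- Let K be a number field with ring of integers O_K. For a nonzero ideal I of O_K and complex s with Re(s) > 1, the Dirichlet series ∑_{J} C_J(I)/N(J)^s, summed over nonzero ideals J of O_K, converges absolutely and equals σ_{K,1−s}(I)/ζ_K(s), where σ_{K,1−s}(I) = ∑_{I₁ | I} N(I₁)^{1−s}. -/
open scoped Classical

open NumberField

variable (K : Type*) [Field K] [NumberField K]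

/-- The Möbius function on nonzero ideals of `𝓞 K`: `(−1)^r` on a product of `r`
distinct prime ideals, `0` if not squarefree. -/
noncomputable def idealMu (I : Ideal (𝓞 K)) : ℤ :=
  if Squarefree I then (-1) ^ Multiset.card (UniqueFactorizationMonoid.factors I) else 0

/-- `σ_{K,z}(I) = ∑_{I₁ | I} N(I₁)^z`. -/
noncomputable def sigmaK (z : ℂ) (I : Ideal (𝓞 K)) : ℂ :=
  ∑' I₁ : Ideal (𝓞 K), if I₁ ∣ I then (Ideal.absNorm I₁ : ℂ) ^ z else 0

/-- The Dedekind zeta function `ζ_K(s) = ∑_{I ≠ 0} N(I)^{−s}`. -/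
noncomputable def zetaK (s : ℂ) : ℂ :=
  ∑' I : {I : Ideal (𝓞 K) // I ≠ ⊥}, (Ideal.absNorm I.1 : ℂ) ^ (-s)

/-- The Ramanujan sum over `K`: `C_J(I) = ∑_{I₁ | J, I₁ | I} N(I₁)·μ(J/I₁)`,
written as a sum over factorizations `J = I₁·I₂`. -/
noncomputable def ramanujanCK (J I : Ideal (𝓞 K)) : ℂ :=
  ∑' p : Ideal (𝓞 K) × Ideal (𝓞 K),
    if p.1 * p.2 = J ∧ p.1 ∣ I then (Ideal.absNorm p.1 : ℂ) * (idealMu K p.2 : ℂ) else 0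

section Aux
open UniqueFactorizationMonoid
set_option maxHeartbeats 1000000
set_option linter.unusedSectionVars false
variable {K}

lemma RS.absNorm_pos {J : Ideal (𝓞 K)} (hJ : J ≠ ⊥) : 0 < Ideal.absNorm J :=
  Nat.pos_of_ne_zero (fun h => hJ (Ideal.absNorm_eq_zero_iff.mp h))

lemma RS.prime_two_le {P : Ideal (𝓞 K)} (hP : Prime P) : 2 ≤ Ideal.absNorm P := by
  have h0 : P ≠ ⊥ := hP.ne_zero
  have h1 : P ≠ ⊤ := fun h => hP.not_unit (Ideal.isUnit_iff.mpr h)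
  have h2 := RS.absNorm_pos h0
  rcases Nat.lt_or_ge (Ideal.absNorm P) 2 with h | h
  · interval_cases h' : Ideal.absNorm P <;> simp_all [Ideal.absNorm_eq_one_iff]
  · exact h

/-- At most `finrank ℤ (𝓞 K)` prime ideals have absolute norm `n`. -/
lemma RS.card_primes_norm_eq {n : ℕ} (hn : 2 ≤ n) (T : Finset (Ideal (𝓞 K)))
    (hT : ∀ P ∈ T, Prime P ∧ Ideal.absNorm P = n) :
    T.card ≤ Module.finrank ℤ (𝓞 K) := by
  set In : Ideal (𝓞 K) := Ideal.span {(n : 𝓞 K)} with hIn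
  have h1 : ∏ P ∈ T, P ∣ In := by
    refine Finset.prod_primes_dvd _ (fun P hP => (hT P hP).1) (fun P hP => ?_)
    rw [Ideal.dvd_iff_le, hIn, Ideal.span_singleton_le_iff_mem]
    have := Ideal.absNorm_mem P
    rwa [(hT P hP).2] at this
  have h2 : Ideal.absNorm (∏ P ∈ T, P) ∣ Ideal.absNorm In := map_dvd _ h1
  have h3 : Ideal.absNorm (∏ P ∈ T, P) = n ^ T.card := by
    rw [map_prod, Finset.prod_congr rfl (fun P hP => (hT P hP).2), Finset.prod_const]
  have h4 : Ideal.absNorm In = n ^ Module.finrank ℤ (𝓞 K) := by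
    rw [hIn, Ideal.absNorm_span_singleton,
      show ((n : 𝓞 K)) = algebraMap ℤ (𝓞 K) (n : ℤ) by simp,
      Algebra.norm_algebraMap_of_basis (Module.Free.chooseBasis ℤ (𝓞 K)),
      Module.finrank_eq_card_chooseBasisIndex]
    simp [Int.natAbs_pow]
  rw [h3, h4] at h2
  exact (Nat.pow_dvd_pow_iff_le_right hn).mp h2

noncomputable def RSW (σ : ℝ) (n : ℕ) : ℝ := if 2 ≤ n then (n : ℝ) ^ (-σ) else 0

lemma RSW_nonneg (σ : ℝ) (n : ℕ) : 0 ≤ RSW σ n := by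
  unfold RSW; split
  · positivity
  · exact le_rfl

lemma RSW_summable {σ : ℝ} (hσ : 1 < σ) : Summable (RSW σ) := by
  refine Summable.of_nonneg_of_le (RSW_nonneg σ) (fun n => ?_)
    (Real.summable_nat_rpow.mpr (by linarith : -σ < -1))
  unfold RSW; split
  · exact le_rfl
  · positivity

/-- Bound for sums of `N(P)^{-σ}` over finitely many primes. -/
lemma RS.sum_primes_le {σ : ℝ} (hσ : 1 < σ) (T : Finset (Ideal (𝓞 K)))
    (hT : ∀ P ∈ T, Prime P) :
    ∑ P ∈ T, (Ideal.absNorm P : ℝ) ^ (-σ) ≤ (Module.finrank ℤ (𝓞 K)) * ∑' n, RSW σ n := by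
  rw [← Finset.sum_fiberwise_of_maps_to (g := Ideal.absNorm)
    (t := T.image Ideal.absNorm) (fun P hP => Finset.mem_image_of_mem _ hP)]
  have key : ∀ n ∈ T.image Ideal.absNorm,
      ∑ P ∈ T.filter (fun P => Ideal.absNorm P = n), (Ideal.absNorm P : ℝ) ^ (-σ)
        ≤ (Module.finrank ℤ (𝓞 K)) * RSW σ n := by
    intro n hn
    obtain ⟨P₀, hP₀, hP₀n⟩ := Finset.mem_image.mp hn
    have hn2 : 2 ≤ n := hP₀n ▸ RS.prime_two_le (hT P₀ hP₀)
    have hcard : (T.filter (fun P => Ideal.absNorm P = n)).card ≤ Module.finrank ℤ (𝓞 K) :=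
      RS.card_primes_norm_eq hn2 _ (fun P hP => by
        rw [Finset.mem_filter] at hP; exact ⟨hT P hP.1, hP.2⟩)
    calc ∑ P ∈ T.filter (fun P => Ideal.absNorm P = n), (Ideal.absNorm P : ℝ) ^ (-σ)
        = ∑ P ∈ T.filter (fun P => Ideal.absNorm P = n), (n : ℝ) ^ (-σ) := by
          refine Finset.sum_congr rfl (fun P hP => ?_)
          rw [Finset.mem_filter] at hP; rw [hP.2]
      _ = (T.filter (fun P => Ideal.absNorm P = n)).card * (n : ℝ) ^ (-σ) := by
          rw [Finset.sum_const, nsmul_eq_mul]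
      _ ≤ (Module.finrank ℤ (𝓞 K)) * (n : ℝ) ^ (-σ) := by
          refine mul_le_mul_of_nonneg_right ?_ (by positivity)
          exact_mod_cast hcard
      _ = (Module.finrank ℤ (𝓞 K)) * RSW σ n := by rw [RSW, if_pos hn2]
  calc ∑ n ∈ T.image Ideal.absNorm, ∑ P ∈ T.filter (fun P => Ideal.absNorm P = n),
        (Ideal.absNorm P : ℝ) ^ (-σ)
      ≤ ∑ n ∈ T.image Ideal.absNorm, (Module.finrank ℤ (𝓞 K)) * RSW σ n :=
        Finset.sum_le_sum key
    _ = (Module.finrank ℤ (𝓞 K)) * ∑ n ∈ T.image Ideal.absNorm, RSW σ n := by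
        rw [Finset.mul_sum]
    _ ≤ (Module.finrank ℤ (𝓞 K)) * ∑' n, RSW σ n := by
        refine mul_le_mul_of_nonneg_left ?_ (by positivity)
        exact (RSW_summable hσ).sum_le_tsum _ (fun n _ => RSW_nonneg σ n)
-- geometric bound
lemma RS.geom_le_exp {x : ℝ} (h0 : 0 ≤ x) (h2 : x ≤ 1/2) (m : ℕ) :
    ∑ k ∈ Finset.range m, x ^ k ≤ Real.exp (2 * x) := by
  have hx1 : x < 1 := by linarith
  have h1 : ∑ k ∈ Finset.range m, x ^ k ≤ (1 - x)⁻¹ := by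
    calc ∑ k ∈ Finset.range m, x ^ k ≤ ∑' k : ℕ, x ^ k :=
          (summable_geometric_of_lt_one h0 hx1).sum_le_tsum _ (fun k _ => by positivity)
      _ = (1 - x)⁻¹ := tsum_geometric_of_lt_one h0 hx1
  have h3 : (1 - x)⁻¹ ≤ 1 + 2 * x := by
    rw [inv_le_iff_one_le_mul₀ (by linarith)]
    nlinarith
  have h4 : 1 + 2 * x ≤ Real.exp (2 * x) := by
    have := Real.add_one_le_exp (2 * x); linarith
  linarith

lemma RS.pow_rpow_comm {a : ℝ} (ha : 0 ≤ a) (c : ℕ) (r : ℝ) :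
    (a ^ c) ^ r = (a ^ r) ^ c := by
  rw [← Real.rpow_natCast a c, ← Real.rpow_mul ha, mul_comm, Real.rpow_mul ha,
    Real.rpow_natCast]

set_option maxHeartbeats 2000000 in
lemma RS.summable_real {K : Type*} [Field K] [NumberField K] {σ : ℝ} (hσ : 1 < σ) :
    Summable (fun J : {J : Ideal (𝓞 K) // J ≠ ⊥} => (Ideal.absNorm J.1 : ℝ) ^ (-σ)) := by
  set d := Module.finrank ℤ (𝓞 K) with hd
  refine summable_of_sum_le (c := Real.exp (2 * (d * ∑' n, RSW σ n)))
    (fun J => by positivity) ?_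
  intro S
  set T₀ : Finset (Ideal (𝓞 K)) := S.biUnion (fun J => (normalizedFactors J.1).toFinset) with hT₀
  have hT₀p : ∀ P ∈ T₀, Prime P := by
    intro P hP
    obtain ⟨J, hJ, hPJ⟩ := Finset.mem_biUnion.mp hP
    exact prime_of_normalized_factor P (Multiset.mem_toFinset.mp hPJ)
  set M := S.sup (fun J => Multiset.card (normalizedFactors J.1)) with hM
  set x : Ideal (𝓞 K) → ℝ := fun P => (Ideal.absNorm P : ℝ) ^ (-σ) with hx
  have hx0 : ∀ P, 0 ≤ x P := fun P => by positivity
  have hxhalf : ∀ P ∈ T₀, x P ≤ 1/2 := by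
    intro P hP
    have h2 : (2:ℝ) ≤ (Ideal.absNorm P : ℝ) := by exact_mod_cast RS.prime_two_le (hT₀p P hP)
    calc x P ≤ (2:ℝ) ^ (-σ) :=
          Real.rpow_le_rpow_of_nonpos (by norm_num) h2 (by linarith)
      _ ≤ (2:ℝ) ^ (-1 : ℝ) := Real.rpow_le_rpow_of_exponent_le (by norm_num) (by linarith)
      _ = 1/2 := by rw [Real.rpow_neg_one]; norm_num
  have hcount : ∀ J ∈ S, ∀ P, Multiset.count P (normalizedFactors J.1) ≤ M :=
    fun J hJ P => le_trans (Multiset.count_le_card P _)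
      (Finset.le_sup (f := fun J : {J : Ideal (𝓞 K) // J ≠ ⊥} => Multiset.card (normalizedFactors J.1)) hJ)
  set ι : {J : Ideal (𝓞 K) // J ≠ ⊥} → (↥T₀ → Fin (M+1)) :=
    fun J P => ⟨min (Multiset.count P.1 (normalizedFactors J.1)) M,
      Nat.lt_succ_of_le (min_le_right _ _)⟩ with hι
  have hmemT₀ : ∀ J ∈ S, ∀ P, P ∈ normalizedFactors J.1 → P ∈ T₀ := by
    intro J hJ P hP
    exact Finset.mem_biUnion.mpr ⟨J, hJ, Multiset.mem_toFinset.mpr hP⟩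
  have key1 : ∀ J ∈ S,
      (Ideal.absNorm J.1 : ℝ) ^ (-σ) = ∏ P : ↥T₀, x P.1 ^ ((ι J P : ℕ)) := by
    intro J hJ
    have hJ0 : J.1 ≠ 0 := J.2
    have h5 : J.1 = (normalizedFactors J.1).prod :=
      (associated_iff_eq.mp (prod_normalizedFactors hJ0)).symm
    have hN : Ideal.absNorm J.1
        = ∏ P ∈ T₀, (Ideal.absNorm P) ^ (Multiset.count P (normalizedFactors J.1)) := by
      conv_lhs => rw [h5]
      rw [map_multiset_prod, Finset.prod_multiset_map_count]
      refine Finset.prod_subset (fun P hP => hmemT₀ J hJ P (Multiset.mem_toFinset.mp hP)) ?_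
      intro P _ hP
      rw [Multiset.count_eq_zero.mpr (fun hc => hP (Multiset.mem_toFinset.mpr hc)), pow_zero]
    have hNr : (Ideal.absNorm J.1 : ℝ)
        = ∏ P ∈ T₀, (Ideal.absNorm P : ℝ) ^ (Multiset.count P (normalizedFactors J.1)) := by
      rw [hN]; push_cast; rfl
    rw [hNr, ← Real.finset_prod_rpow _ _ (fun P _ => by positivity) (-σ)]
    rw [← Finset.prod_coe_sort]
    refine Finset.prod_congr rfl (fun P _ => ?_)
    rw [RS.pow_rpow_comm (by positivity)]
    congr 1
    simp only [hι]
    exact (Nat.min_eq_left (hcount J hJ P.1)).symm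
  have inj : ∀ J ∈ S, ∀ J' ∈ S, ι J = ι J' → J = J' := by
    intro J hJ J' hJ' heq
    have hnf : normalizedFactors J.1 = normalizedFactors J'.1 := by
      ext P
      by_cases hP : P ∈ T₀
      · have := congrFun heq ⟨P, hP⟩
        simp only [hι, Fin.mk.injEq] at this
        rwa [Nat.min_eq_left (hcount J hJ P), Nat.min_eq_left (hcount J' hJ' P)] at this
      · rw [Multiset.count_eq_zero.mpr (fun hc => hP (hmemT₀ J hJ P hc)),
          Multiset.count_eq_zero.mpr (fun hc => hP (hmemT₀ J' hJ' P hc))]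
    have : J.1 = J'.1 := by
      rw [(associated_iff_eq.mp (prod_normalizedFactors J.2)).symm.trans (congrArg Multiset.prod hnf),
        associated_iff_eq.mp (prod_normalizedFactors J'.2)]
    exact Subtype.ext this
  calc ∑ J ∈ S, (Ideal.absNorm J.1 : ℝ) ^ (-σ)
      = ∑ J ∈ S, ∏ P : ↥T₀, x P.1 ^ ((ι J P : ℕ)) := Finset.sum_congr rfl key1
    _ = ∑ f ∈ S.image ι, ∏ P : ↥T₀, x P.1 ^ ((f P : ℕ)) :=
        (Finset.sum_image (f := fun f : ↥T₀ → Fin (M+1) => ∏ P : ↥T₀, x P.1 ^ ((f P : ℕ))) inj).symm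
    _ ≤ ∑ f : ↥T₀ → Fin (M+1), ∏ P : ↥T₀, x P.1 ^ ((f P : ℕ)) :=
        Finset.sum_le_sum_of_subset_of_nonneg (Finset.subset_univ _)
          (fun f _ _ => by positivity)
    _ = ∏ P : ↥T₀, ∑ k : Fin (M+1), x P.1 ^ (k : ℕ) := by
        have h := Finset.prod_univ_sum (κ := fun _ : ↥T₀ => Fin (M+1))
          (fun _ => Finset.univ) (fun P k => x P.1 ^ (k : ℕ))
        rw [Fintype.piFinset_univ] at h
        exact h.symm
    _ ≤ ∏ P : ↥T₀, Real.exp (2 * x P.1) := by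
        refine Finset.prod_le_prod (fun P _ => Finset.sum_nonneg (fun k _ => by positivity))
          (fun P _ => ?_)
        have := RS.geom_le_exp (hx0 P.1) (hxhalf P.1 P.2) (M+1)
        rwa [← Fin.sum_univ_eq_sum_range (fun k => x P.1 ^ k) (M+1)] at this
    _ = Real.exp (∑ P ∈ T₀, 2 * x P) := by
        rw [Real.exp_sum]
        exact Finset.prod_coe_sort T₀ (fun P => Real.exp (2 * x P))
    _ ≤ Real.exp (2 * (d * ∑' n, RSW σ n)) := by
        rw [Real.exp_le_exp, ← Finset.mul_sum]
        exact mul_le_mul_of_nonneg_left (RS.sum_primes_le hσ T₀ hT₀p) (by norm_num)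

lemma RS.support_subset {E : Type*} [AddCommMonoid E] [TopologicalSpace E]
    (f : Ideal (𝓞 K) → E) (hbot : f ⊥ = 0) :
    Function.support f ⊆ {J : Ideal (𝓞 K) | J ≠ ⊥} := by
  intro J hJ h
  simp only [Function.mem_support] at hJ
  exact hJ (h ▸ hbot)

lemma RS.summable_iff_subtype {E : Type*} [NormedAddCommGroup E] [CompleteSpace E]
    (f : Ideal (𝓞 K) → E) (hbot : f ⊥ = 0) :
    Summable (fun J : {J : Ideal (𝓞 K) // J ≠ ⊥} => f J.1) ↔ Summable f := by
  constructor
  · intro h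
    have h2 := summable_subtype_iff_indicator (s := {J : Ideal (𝓞 K) | J ≠ ⊥}) (f := f)
    rw [Set.indicator_eq_self.mpr (RS.support_subset f hbot)] at h2
    exact h2.mp h
  · intro h; exact h.subtype _

lemma RS.tsum_subtype_bot {E : Type*} [AddCommMonoid E] [TopologicalSpace E] [T2Space E]
    (f : Ideal (𝓞 K) → E) (hbot : f ⊥ = 0) :
    ∑' (J : {J : Ideal (𝓞 K) // J ≠ ⊥}), f J.1 = ∑' J, f J :=
  tsum_subtype_eq_of_support_subset (RS.support_subset f hbot)

def RS.fibEquiv (K : Type*) [Field K] [NumberField K] :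
    (Σ J : {J : Ideal (𝓞 K) // J ≠ ⊥},
      {p : Ideal (𝓞 K) × Ideal (𝓞 K) // p.1 * p.2 = J.1}) ≃
      {p : Ideal (𝓞 K) × Ideal (𝓞 K) // p.1 * p.2 ≠ ⊥} where
  toFun x := ⟨x.2.1, by rw [x.2.2]; exact x.1.2⟩
  invFun p := ⟨⟨p.1.1 * p.1.2, p.2⟩, ⟨p.1, rfl⟩⟩
  left_inv := by
    rintro ⟨⟨J, hJ⟩, ⟨p, hp⟩⟩
    have hp' : p.1 * p.2 = J := hp
    subst hp'
    rfl
  right_inv := fun p => rfl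

lemma RS.master {E : Type*} [NormedAddCommGroup E] [CompleteSpace E]
    (f : Ideal (𝓞 K) × Ideal (𝓞 K) → E)
    (h0 : ∀ p : Ideal (𝓞 K) × Ideal (𝓞 K), p.1 * p.2 = ⊥ → f p = 0) (hf : Summable f) :
    (Summable fun J : {J : Ideal (𝓞 K) // J ≠ ⊥} =>
        ∑' p : {p : Ideal (𝓞 K) × Ideal (𝓞 K) // p.1 * p.2 = J.1}, f p.1) ∧
      ∑' p : Ideal (𝓞 K) × Ideal (𝓞 K), f p =
        ∑' (J : {J : Ideal (𝓞 K) // J ≠ ⊥}),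
          ∑' (p : {p : Ideal (𝓞 K) × Ideal (𝓞 K) // p.1 * p.2 = J.1}), f p.1 := by
  have hsupp : Function.support f ⊆ {p : Ideal (𝓞 K) × Ideal (𝓞 K) | p.1 * p.2 ≠ ⊥} :=
    fun p hp h => hp (h0 p h)
  have h1 : Summable (fun p : {p : Ideal (𝓞 K) × Ideal (𝓞 K) // p.1 * p.2 ≠ ⊥} => f p.1) :=
    hf.subtype _
  have h2 : Summable (fun x : Σ J : {J : Ideal (𝓞 K) // J ≠ ⊥},
      {p : Ideal (𝓞 K) × Ideal (𝓞 K) // p.1 * p.2 = J.1} => f x.2.1) :=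
    (Equiv.summable_iff (RS.fibEquiv K)).mpr h1
  refine ⟨h2.sigma, ?_⟩
  calc ∑' p : Ideal (𝓞 K) × Ideal (𝓞 K), f p
      = ∑' x : ↥{p : Ideal (𝓞 K) × Ideal (𝓞 K) | p.1 * p.2 ≠ ⊥}, f x.1 :=
        (tsum_subtype_eq_of_support_subset hsupp).symm
    _ = ∑' x : (Σ J : {J : Ideal (𝓞 K) // J ≠ ⊥},
          {p : Ideal (𝓞 K) × Ideal (𝓞 K) // p.1 * p.2 = J.1}), f x.2.1 :=
        (Equiv.tsum_eq (RS.fibEquiv K) (fun p : {p : Ideal (𝓞 K) × Ideal (𝓞 K) // p.1 * p.2 ≠ ⊥} => f p.1)).symm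
    _ = ∑' (J : {J : Ideal (𝓞 K) // J ≠ ⊥})
          (p : {p : Ideal (𝓞 K) × Ideal (𝓞 K) // p.1 * p.2 = J.1}), f p.1 :=
        h2.tsum_sigma' (fun J => hf.subtype _)
lemma RS.card_factors_eq (J : Ideal (𝓞 K)) :
    Multiset.card (factors J) = Multiset.card (normalizedFactors J) := by
  rw [normalizedFactors, Multiset.card_map]

lemma RS.mu_of_not_squarefree {J : Ideal (𝓞 K)} (h : ¬ Squarefree J) : idealMu K J = 0 := by
  simp [idealMu, h]

/-- `∑_{D ∣ J} μ(D) = [J = ⊤]` for a nonzero ideal `J`. -/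
lemma RS.sum_mu_divisors (J : Ideal (𝓞 K)) (hJ : J ≠ ⊥)
    [Fintype {D : Ideal (𝓞 K) // D ∣ J}] :
    ∑ D : {D : Ideal (𝓞 K) // D ∣ J}, (idealMu K D.1 : ℂ) = if J = ⊤ then 1 else 0 := by
  have hJ0 : J ≠ 0 := hJ
  set Q : Finset (Ideal (𝓞 K)) := (normalizedFactors J).toFinset with hQ
  have hQprime : ∀ P ∈ Q, Prime P :=
    fun P hP => prime_of_normalized_factor P (Multiset.mem_toFinset.mp hP)
  -- the RHS condition
  have hTop : (J = ⊤) ↔ (Q = ∅) := by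
    constructor
    · intro h
      rw [hQ, h, ← Ideal.one_eq_top, normalizedFactors_one, Multiset.toFinset_zero]
    · intro h
      have h0 : normalizedFactors J = 0 := by rwa [hQ, Multiset.toFinset_eq_empty] at h
      have h1 := prod_normalizedFactors hJ0
      rw [h0, Multiset.prod_zero] at h1
      exact Ideal.isUnit_iff.mp (associated_one_iff_isUnit.mp h1.symm)
  -- key facts about products of subsets of Q
  have hD0 : ∀ D : Ideal (𝓞 K), D ∣ J → D ≠ 0 := fun D hD => ne_zero_of_dvd_ne_zero hJ0 hD
  have hnfE : ∀ E : Finset (Ideal (𝓞 K)), E ∈ Q.powerset →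
      normalizedFactors (∏ P ∈ E, P) = E.val := by
    intro E hE
    have hEp : ∀ P ∈ E.val, Prime P :=
      fun P hP => hQprime P (Finset.mem_powerset.mp hE hP)
    have h : ∏ P ∈ E, P = E.val.prod := (Finset.prod_val E).symm
    rw [h, normalizedFactors_prod_of_prime hEp]
  have hdvdE : ∀ E : Finset (Ideal (𝓞 K)), E ∈ Q.powerset → (∏ P ∈ E, P) ∣ J := by
    intro E hE
    refine Finset.prod_primes_dvd _ (fun P hP => hQprime P (Finset.mem_powerset.mp hE hP))
      (fun P hP => ?_)
    exact dvd_of_mem_normalizedFactors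
      (Multiset.mem_toFinset.mp (Finset.mem_powerset.mp hE hP))
  have hsqE : ∀ E : Finset (Ideal (𝓞 K)), E ∈ Q.powerset → Squarefree (∏ P ∈ E, P) := by
    intro E hE
    refine (squarefree_iff_nodup_normalizedFactors (hD0 _ (hdvdE E hE))).mpr ?_
    rw [hnfE E hE]
    exact E.nodup
  -- restrict to squarefree divisors
  rw [← Finset.sum_filter_of_ne
    (p := fun D : {D : Ideal (𝓞 K) // D ∣ J} => Squarefree D.1)
    (s := Finset.univ)
    (fun D _ hne => by
      by_contra h
      exact hne (by rw [RS.mu_of_not_squarefree h, Int.cast_zero]))]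
  rw [if_congr hTop rfl rfl]
  have hpow : (∑ E ∈ Q.powerset, (-1 : ℂ) ^ E.card) = if Q = ∅ then 1 else 0 := by
    have h := Finset.sum_powerset_neg_one_pow_card (x := Q)
    calc (∑ E ∈ Q.powerset, (-1:ℂ)^E.card)
        = ((∑ E ∈ Q.powerset, (-1:ℤ)^E.card : ℤ) : ℂ) := by push_cast; rfl
      _ = ((if Q = ∅ then 1 else 0 : ℤ) : ℂ) := by rw [h]
      _ = if Q = ∅ then 1 else 0 := by split_ifs <;> simp
  rw [← hpow]
  refine Finset.sum_nbij' (i := fun D : {D : Ideal (𝓞 K) // D ∣ J} =>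
      (normalizedFactors D.1).toFinset)
    (j := fun E => if hE : E ∈ Q.powerset then ⟨∏ P ∈ E, P, hdvdE E hE⟩ else ⟨J, dvd_rfl⟩)
    ?_ ?_ ?_ ?_ ?_
  · -- maps into powerset
    intro D _
    rw [Finset.mem_powerset, hQ]
    intro P hP
    rw [Multiset.mem_toFinset] at hP ⊢
    exact Multiset.mem_of_le
      ((dvd_iff_normalizedFactors_le_normalizedFactors (hD0 _ D.2) hJ0).mp D.2) hP
  · -- maps into filter
    intro E hE
    rw [dif_pos hE, Finset.mem_filter]
    exact ⟨Finset.mem_univ _, hsqE E hE⟩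
  · -- left inverse
    intro D hD
    have hsq : Squarefree D.1 := (Finset.mem_filter.mp hD).2
    have hmem : (normalizedFactors D.1).toFinset ∈ Q.powerset := by
      rw [Finset.mem_powerset, hQ]
      intro P hP
      rw [Multiset.mem_toFinset] at hP ⊢
      exact Multiset.mem_of_le
        ((dvd_iff_normalizedFactors_le_normalizedFactors (hD0 _ D.2) hJ0).mp D.2) hP
    rw [dif_pos hmem]
    refine Subtype.ext ?_
    have hnod : (normalizedFactors D.1).Nodup :=
      (squarefree_iff_nodup_normalizedFactors (hD0 _ D.2)).mp hsq
    have hval : (normalizedFactors D.1).toFinset.val = normalizedFactors D.1 := by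
      rw [Multiset.toFinset_val, Multiset.dedup_eq_self.mpr hnod]
    calc ∏ P ∈ (normalizedFactors D.1).toFinset, P
        = (normalizedFactors D.1).toFinset.val.prod := (Finset.prod_val _).symm
      _ = (normalizedFactors D.1).prod := by rw [hval]
      _ = D.1 := associated_iff_eq.mp (prod_normalizedFactors (hD0 _ D.2))
  · -- right inverse
    intro E hE
    rw [dif_pos hE]
    show (normalizedFactors (∏ P ∈ E, P)).toFinset = E
    rw [hnfE E hE, Finset.val_toFinset]
  · -- values agree
    intro D hD
    have hsq : Squarefree D.1 := (Finset.mem_filter.mp hD).2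
    have hnod : (normalizedFactors D.1).Nodup :=
      (squarefree_iff_nodup_normalizedFactors (hD0 _ D.2)).mp hsq
    rw [idealMu, if_pos hsq, RS.card_factors_eq,
      ← Multiset.toFinset_card_of_nodup hnod]
    push_cast
    rfl
lemma RS.natCast_mul_cpow (a b : ℕ) (w : ℂ) :
    (((a * b : ℕ)) : ℂ) ^ w = (a : ℂ) ^ w * (b : ℂ) ^ w := by
  have h := Complex.mul_cpow_ofReal_nonneg (Nat.cast_nonneg a) (Nat.cast_nonneg b) w
  push_cast at h ⊢
  exact h

lemma RS.tsum_mu_fiber (J : Ideal (𝓞 K)) (hJ : J ≠ ⊥) :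
    ∑' p : {p : Ideal (𝓞 K) × Ideal (𝓞 K) // p.1 * p.2 = J}, (idealMu K p.1.2 : ℂ) =
      if J = ⊤ then 1 else 0 := by
  have hJ0 : J ≠ 0 := hJ
  haveI : Fintype {D : Ideal (𝓞 K) // D ∣ J} :=
    UniqueFactorizationMonoid.fintypeSubtypeDvd J hJ0
  have hbij : Function.Bijective
      (fun p : {p : Ideal (𝓞 K) × Ideal (𝓞 K) // p.1 * p.2 = J} =>
        (⟨p.1.2, ⟨p.1.1, by rw [mul_comm]; exact p.2.symm⟩⟩ : {D : Ideal (𝓞 K) // D ∣ J})) := by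
    constructor
    · rintro ⟨⟨a, b⟩, hab⟩ ⟨⟨c, d⟩, hcd⟩ h
      simp only [Subtype.mk.injEq] at h
      have hb0 : b ≠ 0 := fun h0 => hJ0 (by rw [← hab, h0, mul_zero])
      refine Subtype.ext (Prod.ext ?_ h)
      subst h
      exact mul_right_cancel₀ hb0 (hab.trans hcd.symm)
    · rintro ⟨D, C, hC⟩
      exact ⟨⟨(C, D), by rw [mul_comm]; exact hC.symm⟩, rfl⟩
  calc ∑' p : {p : Ideal (𝓞 K) × Ideal (𝓞 K) // p.1 * p.2 = J}, (idealMu K p.1.2 : ℂ)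
      = ∑' D : {D : Ideal (𝓞 K) // D ∣ J}, (idealMu K D.1 : ℂ) :=
        (Equiv.ofBijective _ hbij).tsum_eq (fun D => (idealMu K D.1 : ℂ))
    _ = ∑ D : {D : Ideal (𝓞 K) // D ∣ J}, (idealMu K D.1 : ℂ) := tsum_fintype _
    _ = if J = ⊤ then 1 else 0 := RS.sum_mu_divisors J hJ
end Aux

section Main
open UniqueFactorizationMonoid
set_option maxHeartbeats 1000000
set_option linter.unusedSectionVars false
variable {K}

lemma RS.mu_bot : idealMu K ⊥ = 0 := by
  have h : ¬ Squarefree (⊥ : Ideal (𝓞 K)) := not_squarefree_zero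
  simp [idealMu, h]

lemma RS.mu_norm_le (J : Ideal (𝓞 K)) : ‖(idealMu K J : ℂ)‖ ≤ 1 := by
  unfold idealMu
  split
  · push_cast
    rw [norm_pow, norm_neg, norm_one, one_pow]
  · simp

lemma RS.hsne {s : ℂ} (hs : 1 < s.re) : s ≠ 0 := by
  intro h; rw [h] at hs; simp at hs; linarith

lemma RS.Zf_bot {s : ℂ} (hs : 1 < s.re) :
    ((Ideal.absNorm (⊥ : Ideal (𝓞 K)) : ℂ)) ^ (-s) = 0 := by
  rw [Ideal.absNorm_eq_zero_iff.mpr rfl, Nat.cast_zero,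
    Complex.zero_cpow (neg_ne_zero.mpr (RS.hsne hs))]

lemma RS.Zf_norm_eq {s : ℂ} {J : Ideal (𝓞 K)} (hJ : J ≠ ⊥) :
    ‖(Ideal.absNorm J : ℂ) ^ (-s)‖ = (Ideal.absNorm J : ℝ) ^ (-s.re) := by
  rw [Complex.norm_natCast_cpow_of_pos (RS.absNorm_pos hJ), Complex.neg_re]

lemma RS.Zf_norm_summable {s : ℂ} (hs : 1 < s.re) :
    Summable (fun J : Ideal (𝓞 K) => ‖(Ideal.absNorm J : ℂ) ^ (-s)‖) := by
  refine (RS.summable_iff_subtype _ (by rw [RS.Zf_bot hs, norm_zero])).mp ?_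
  exact (RS.summable_real hs).congr (fun J => (RS.Zf_norm_eq J.2).symm)

lemma RS.Mf_norm_le {s : ℂ} (J : Ideal (𝓞 K)) :
    ‖(idealMu K J : ℂ) * (Ideal.absNorm J : ℂ) ^ (-s)‖ ≤ ‖(Ideal.absNorm J : ℂ) ^ (-s)‖ := by
  rw [norm_mul]
  exact mul_le_of_le_one_left (norm_nonneg _) (RS.mu_norm_le J)

lemma RS.Mf_norm_summable {s : ℂ} (hs : 1 < s.re) :
    Summable (fun J : Ideal (𝓞 K) => ‖(idealMu K J : ℂ) * (Ideal.absNorm J : ℂ) ^ (-s)‖) :=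
  Summable.of_nonneg_of_le (fun _ => norm_nonneg _) (fun J => RS.Mf_norm_le J)
    (RS.Zf_norm_summable hs)

lemma RS.zetaK_eq {s : ℂ} (hs : 1 < s.re) :
    zetaK K s = ∑' J : Ideal (𝓞 K), (Ideal.absNorm J : ℂ) ^ (-s) :=
  RS.tsum_subtype_bot (fun J : Ideal (𝓞 K) => (Ideal.absNorm J : ℂ) ^ (-s)) (RS.Zf_bot hs)

lemma RS.mu_tsum_eq_inv {s : ℂ} (hs : 1 < s.re) :
    zetaK K s ≠ 0 ∧
      (∑' J : Ideal (𝓞 K), (idealMu K J : ℂ) * (Ideal.absNorm J : ℂ) ^ (-s)) =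
        (zetaK K s)⁻¹ := by
  set Zf : Ideal (𝓞 K) → ℂ := fun J => (Ideal.absNorm J : ℂ) ^ (-s) with hZf
  set Mf : Ideal (𝓞 K) → ℂ := fun J => (idealMu K J : ℂ) * (Ideal.absNorm J : ℂ) ^ (-s) with hMf
  have hZbot : Zf ⊥ = 0 := RS.Zf_bot hs
  have hMbot : Mf ⊥ = 0 := by
    show (idealMu K (⊥ : Ideal (𝓞 K)) : ℂ) * _ = 0
    rw [RS.mu_bot, Int.cast_zero, zero_mul]
  have h0 : ∀ p : Ideal (𝓞 K) × Ideal (𝓞 K), p.1 * p.2 = ⊥ → Zf p.1 * Mf p.2 = 0 := by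
    intro p hp
    rcases mul_eq_zero.mp hp with h | h
    · rw [h, show (0 : Ideal (𝓞 K)) = ⊥ from rfl, hZbot, zero_mul]
    · rw [h, show (0 : Ideal (𝓞 K)) = ⊥ from rfl, hMbot, mul_zero]
  have hprod : Summable (fun p : Ideal (𝓞 K) × Ideal (𝓞 K) => Zf p.1 * Mf p.2) :=
    summable_mul_of_summable_norm (RS.Zf_norm_summable hs) (RS.Mf_norm_summable hs)
  obtain ⟨-, hdecomp⟩ := RS.master (fun p => Zf p.1 * Mf p.2) h0 hprod
  have hfib : ∀ J : {J : Ideal (𝓞 K) // J ≠ ⊥},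
      (∑' p : {p : Ideal (𝓞 K) × Ideal (𝓞 K) // p.1 * p.2 = J.1}, Zf p.1.1 * Mf p.1.2) =
        Zf J.1 * (if J.1 = ⊤ then 1 else 0) := by
    intro J
    have hptw : ∀ p : {p : Ideal (𝓞 K) × Ideal (𝓞 K) // p.1 * p.2 = J.1},
        Zf p.1.1 * Mf p.1.2 = Zf J.1 * (idealMu K p.1.2 : ℂ) := by
      rintro ⟨⟨a, b⟩, hab⟩
      simp only [hZf, hMf]
      rw [← hab, map_mul, RS.natCast_mul_cpow]
      ring
    rw [tsum_congr hptw, tsum_mul_left, RS.tsum_mu_fiber J.1 J.2]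
  have hzm : (∑' J, Zf J) * (∑' J, Mf J) = 1 := by
    rw [tsum_mul_tsum_of_summable_norm (RS.Zf_norm_summable hs) (RS.Mf_norm_summable hs),
      hdecomp, tsum_congr hfib,
      tsum_eq_single (⟨⊤, by simp⟩ : {J : Ideal (𝓞 K) // J ≠ ⊥})
        (fun J hJ => by
          rw [if_neg (fun h => hJ (Subtype.ext h)), mul_zero])]
    show Zf ⊤ * (if (⊤ : Ideal (𝓞 K)) = ⊤ then 1 else 0) = 1
    rw [if_pos rfl, mul_one]
    show ((Ideal.absNorm (⊤ : Ideal (𝓞 K)) : ℂ)) ^ (-s) = 1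
    rw [Ideal.absNorm_eq_one_iff.mpr rfl, Nat.cast_one, Complex.one_cpow]
  rw [RS.zetaK_eq hs]
  exact ⟨left_ne_zero_of_mul_eq_one hzm, eq_inv_of_mul_eq_one_right hzm⟩

end Main

set_option maxHeartbeats 2000000 in
set_option synthInstance.maxHeartbeats 400000 in
/-- For a nonzero ideal `I` and `Re(s) > 1`, the Dirichlet series
`∑_J C_J(I)/N(J)^s` converges absolutely to `σ_{K,1−s}(I)/ζ_K(s)`. -/
theorem ramanujanCK_dirichlet_series (I : Ideal (𝓞 K)) (hI : I ≠ ⊥) (s : ℂ)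
    (hs : 1 < s.re) :
    Summable (fun J : {J : Ideal (𝓞 K) // J ≠ ⊥} =>
        ‖ramanujanCK K J.1 I / (Ideal.absNorm J.1 : ℂ) ^ s‖) ∧
      ∑' J : {J : Ideal (𝓞 K) // J ≠ ⊥},
          ramanujanCK K J.1 I / (Ideal.absNorm J.1 : ℂ) ^ s =
        sigmaK K (1 - s) I / zetaK K s := by
  classical
  have hI0 : I ≠ 0 := hI
  set Gf : Ideal (𝓞 K) → ℂ :=
    (fun D => if D ∣ I then (Ideal.absNorm D : ℂ) ^ (1 - s) else 0) with hGf
  set Mf : Ideal (𝓞 K) → ℂ :=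
    (fun J => (idealMu K J : ℂ) * (Ideal.absNorm J : ℂ) ^ (-s)) with hMf
  haveI : Fintype {D : Ideal (𝓞 K) // D ∣ I} :=
    UniqueFactorizationMonoid.fintypeSubtypeDvd I hI0
  have hfin : {D : Ideal (𝓞 K) | D ∣ I}.Finite :=
    Set.finite_coe_iff.mp (Finite.of_fintype {D : Ideal (𝓞 K) // D ∣ I})
  have hGnorm : Summable (fun D => ‖Gf D‖) := by
    refine summable_of_ne_finset_zero (s := hfin.toFinset) (fun D hD => ?_)
    rw [Set.Finite.mem_toFinset, Set.mem_setOf_eq] at hD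
    show ‖if D ∣ I then (Ideal.absNorm D : ℂ) ^ (1 - s) else 0‖ = 0
    rw [if_neg hD, norm_zero]
  have hMnorm := RS.Mf_norm_summable (K := K) (s := s) hs
  have hMbot : Mf ⊥ = 0 := by
    show (idealMu K (⊥ : Ideal (𝓞 K)) : ℂ) * _ = 0
    rw [RS.mu_bot, Int.cast_zero, zero_mul]
  have hGbot : Gf ⊥ = 0 := by
    have hbotdvd : ¬ ((⊥ : Ideal (𝓞 K)) ∣ I) := fun h => hI (zero_dvd_iff.mp h)
    show (if (⊥ : Ideal (𝓞 K)) ∣ I then (Ideal.absNorm (⊥ : Ideal (𝓞 K)) : ℂ) ^ (1 - s) else 0) = 0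
    rw [if_neg hbotdvd]
  have h0 : ∀ p : Ideal (𝓞 K) × Ideal (𝓞 K), p.1 * p.2 = ⊥ → Gf p.1 * Mf p.2 = 0 := by
    intro p hp
    rcases mul_eq_zero.mp hp with h | h
    · rw [h, show (0 : Ideal (𝓞 K)) = ⊥ from rfl, hGbot, zero_mul]
    · rw [h, show (0 : Ideal (𝓞 K)) = ⊥ from rfl, hMbot, mul_zero]
  have h0n : ∀ p : Ideal (𝓞 K) × Ideal (𝓞 K), p.1 * p.2 = ⊥ → ‖Gf p.1 * Mf p.2‖ = 0 :=
    fun p hp => by rw [h0 p hp, norm_zero]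
  have hFsum : Summable (fun p : Ideal (𝓞 K) × Ideal (𝓞 K) => Gf p.1 * Mf p.2) :=
    summable_mul_of_summable_norm hGnorm hMnorm
  have hFnorm : Summable (fun p : Ideal (𝓞 K) × Ideal (𝓞 K) => ‖Gf p.1 * Mf p.2‖) :=
    ((hGnorm.mul_of_nonneg hMnorm (fun _ => norm_nonneg _) (fun _ => norm_nonneg _)).congr
      (fun p => (norm_mul _ _).symm))
  obtain ⟨hsum2, hdecomp2⟩ := RS.master (fun p => Gf p.1 * Mf p.2) h0 hFsum
  obtain ⟨hsum2n, -⟩ := RS.master (E := ℝ) (fun p => ‖Gf p.1 * Mf p.2‖) h0n hFnorm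
  have hram : ∀ J : {J : Ideal (𝓞 K) // J ≠ ⊥},
      ramanujanCK K J.1 I / (Ideal.absNorm J.1 : ℂ) ^ s =
        ∑' p : {p : Ideal (𝓞 K) × Ideal (𝓞 K) // p.1 * p.2 = J.1}, Gf p.1.1 * Mf p.1.2 := by
    intro J
    have hsupp : Function.support (fun p : Ideal (𝓞 K) × Ideal (𝓞 K) =>
        if p.1 * p.2 = J.1 ∧ p.1 ∣ I then (Ideal.absNorm p.1 : ℂ) * (idealMu K p.2 : ℂ) else 0)
        ⊆ {p : Ideal (𝓞 K) × Ideal (𝓞 K) | p.1 * p.2 = J.1} := by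
      intro p hp
      rw [Function.mem_support] at hp
      by_contra h
      exact hp (if_neg (fun hc => h hc.1))
    have h1 : ramanujanCK K J.1 I =
        ∑' p : {p : Ideal (𝓞 K) × Ideal (𝓞 K) // p.1 * p.2 = J.1},
          (if p.1.1 ∣ I then (Ideal.absNorm p.1.1 : ℂ) * (idealMu K p.1.2 : ℂ) else 0) := by
      rw [ramanujanCK, ← tsum_subtype_eq_of_support_subset hsupp]
      exact tsum_congr (fun p => by
        rcases p with ⟨p, hp⟩
        have hp' : p.1 * p.2 = J.1 := hp
        simp [hp'])
    have h2 : ∀ p : {p : Ideal (𝓞 K) × Ideal (𝓞 K) // p.1 * p.2 = J.1},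
        (if p.1.1 ∣ I then (Ideal.absNorm p.1.1 : ℂ) * (idealMu K p.1.2 : ℂ) else 0) *
          (Ideal.absNorm J.1 : ℂ) ^ (-s) = Gf p.1.1 * Mf p.1.2 := by
      rintro ⟨⟨a, b⟩, hab⟩
      dsimp only at hab ⊢
      have ha : a ≠ ⊥ := fun h => J.2 (by
        rw [← hab, h, show (⊥ : Ideal (𝓞 K)) = 0 from rfl, zero_mul])
      have hNa : (Ideal.absNorm a : ℂ) ≠ 0 := Nat.cast_ne_zero.mpr (RS.absNorm_pos ha).ne'
      simp only [hGf, hMf]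
      by_cases hdvd : a ∣ I
      · rw [if_pos hdvd, if_pos hdvd, ← hab, map_mul, RS.natCast_mul_cpow,
          show (1 : ℂ) - s = 1 + -s by ring, Complex.cpow_add _ _ hNa, Complex.cpow_one]
        ring
      · rw [if_neg hdvd, if_neg hdvd, zero_mul, zero_mul]
    calc ramanujanCK K J.1 I / (Ideal.absNorm J.1 : ℂ) ^ s
        = ramanujanCK K J.1 I * (Ideal.absNorm J.1 : ℂ) ^ (-s) := by
          rw [Complex.cpow_neg, div_eq_mul_inv]
      _ = ∑' p : {p : Ideal (𝓞 K) × Ideal (𝓞 K) // p.1 * p.2 = J.1},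
            (if p.1.1 ∣ I then (Ideal.absNorm p.1.1 : ℂ) * (idealMu K p.1.2 : ℂ) else 0) *
              (Ideal.absNorm J.1 : ℂ) ^ (-s) := by rw [h1, tsum_mul_right]
      _ = _ := tsum_congr h2
  obtain ⟨hzne, hMinv⟩ := RS.mu_tsum_eq_inv (K := K) (s := s) hs
  constructor
  · refine Summable.of_nonneg_of_le (fun J => norm_nonneg _) (fun J => ?_) hsum2n
    rw [hram J]
    exact norm_tsum_le_tsum_norm (hFnorm.subtype _)
  · calc ∑' J : {J : Ideal (𝓞 K) // J ≠ ⊥}, ramanujanCK K J.1 I / (Ideal.absNorm J.1 : ℂ) ^ s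
        = ∑' (J : {J : Ideal (𝓞 K) // J ≠ ⊥})
            (p : {p : Ideal (𝓞 K) × Ideal (𝓞 K) // p.1 * p.2 = J.1}), Gf p.1.1 * Mf p.1.2 :=
          tsum_congr hram
      _ = ∑' p : Ideal (𝓞 K) × Ideal (𝓞 K), Gf p.1 * Mf p.2 := hdecomp2.symm
      _ = (∑' D, Gf D) * (∑' J, Mf J) :=
          (tsum_mul_tsum_of_summable_norm hGnorm hMnorm).symm
      _ = sigmaK K (1 - s) I / zetaK K s := by
          rw [hMf, hMinv, div_eq_mul_inv]
          rfl
end
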